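/- Let n ≥ 1 and let σ be a permutation of {1, ..., n}. Then the element Q = Σ_{i=1}^n E_{σ(i),i} ⊗ E_{i,σ(i)} of Mat_n(ℂ) ⊗ Mat_n(ℂ) satisfies the Yang–Baxter equation Q₁₂ * Q₁₃ * Q₂₃ = Q₂₃ * Q₁₃ * Q₁₂ in Mat_n(ℂ)^{⊗3}. -/

import Mathlib

open scoped TensorProduct

noncomputable section

variable (M : Type) [Ring M] [Algebra ℂ M]

/-- Embedding of `M ⊗ M` into the first two factors of `M ⊗ M ⊗ M`. -/
noncomputable def emb12 : (M ⊗[ℂ] M) →ₐ[ℂ] (M ⊗[ℂ] M) ⊗[ℂ] M :=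
  Algebra.TensorProduct.includeLeft

/-- Embedding of `M ⊗ M` into the first and third factors of `M ⊗ M ⊗ M`. -/
noncomputable def emb13 : (M ⊗[ℂ] M) →ₐ[ℂ] (M ⊗[ℂ] M) ⊗[ℂ] M :=
  Algebra.TensorProduct.map Algebra.TensorProduct.includeLeft (AlgHom.id ℂ M)

/-- Embedding of `M ⊗ M` into the last two factors of `M ⊗ M ⊗ M`. -/
noncomputable def emb23 : (M ⊗[ℂ] M) →ₐ[ℂ] (M ⊗[ℂ] M) ⊗[ℂ] M :=
  Algebra.TensorProduct.map Algebra.TensorProduct.includeRight (AlgHom.id ℂ M)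

/-- The Yang–Baxter equation for `R ∈ M ⊗ M`. -/
def YBE (R : M ⊗[ℂ] M) : Prop :=
  emb12 M R * emb13 M R * emb23 M R = emb23 M R * emb13 M R * emb12 M R

/-- The matrix units `E i j`. -/
noncomputable def E (n : ℕ) (i j : Fin n) : Matrix (Fin n) (Fin n) ℂ :=
  Matrix.single i j 1

/-- For any permutation `σ` of `{1,…,n}`, the element
`Q = Σᵢ E_{σ(i),i} ⊗ E_{i,σ(i)}` satisfies the Yang–Baxter equation. -/
lemma Emul (n : ℕ) (a b c d : Fin n) :
    E n a b * E n c d = if b = c then E n a d else 0 := by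
  unfold E
  split
  · subst ‹b = c›; simp [Matrix.single_mul_single_same]
  · show Matrix.single a b (1:ℂ) * Matrix.single c d 1 = 0
    exact Matrix.single_mul_single_of_ne (1:ℂ) a b c ‹b ≠ c› 1

set_option maxHeartbeats 1000000 in
set_option synthInstance.maxHeartbeats 400000 in
theorem stmt13 (n : ℕ) (hn : 1 ≤ n) (σ : Equiv.Perm (Fin n)) :
    YBE (Matrix (Fin n) (Fin n) ℂ)
      (∑ i, E n (σ i) i ⊗ₜ[ℂ] E n i (σ i)) := by
  unfold YBE
  simp only [map_sum, emb12, emb13, emb23, Algebra.TensorProduct.includeLeft_apply,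
    Algebra.TensorProduct.map_tmul, AlgHom.coe_id, id_eq,
    Algebra.TensorProduct.includeRight_apply]
  simp only [Finset.sum_mul, Finset.mul_sum, Algebra.TensorProduct.tmul_mul_tmul,
    Emul, one_mul, mul_one]
  simp only [TensorProduct.ite_tmul, TensorProduct.tmul_ite, TensorProduct.tmul_zero,
    TensorProduct.zero_tmul, Finset.sum_ite_eq, Finset.sum_ite_eq', Finset.mem_univ, if_true,
    Equiv.apply_eq_iff_eq]
  conv_lhs => rw [Finset.sum_comm]; enter [2, x1]; rw [Finset.sum_comm]
  conv_rhs => enter [2, x]; rw [Finset.sum_comm]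
  simp only [Finset.sum_ite_eq, Finset.sum_ite_eq', Finset.mem_univ, if_true,
    Equiv.apply_eq_iff_eq]
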